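/- Define B_n ∈ ℤ[c] by B_n = ∏_{d|n} A_d^{μ(n/d)} where A_1 = c, A_{k+1} = A_k² + c. Then B_n(0) = 0 if n = 1 and B_n(0) = 1 if n > 1; B_n(-1) = -1 if n = 1, 0 if n = 2, and 1 if n > 2. -/
import Mathlib


open Polynomial

theorem stmt_17 (A : ℕ → Polynomial ℤ)
    (hA1 : A 1 = X)
    (hArec : ∀ n ≥ 1, A (n + 1) = (A n) ^ 2 + X)
    (B : ℕ → Polynomial ℤ)
    (hBmonic : ∀ n ≥ 1, (B n).Monic)
    (hBprod : ∀ n ≥ 1, A n = ∏ d ∈ n.divisors, B d) :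
    ((B 1).eval 0 = 0 ∧ ∀ n > 1, (B n).eval 0 = 1) ∧
    ((B 1).eval (-1) = -1 ∧ (B 2).eval (-1) = 0 ∧ ∀ n > 2, (B n).eval (-1) = 1) := by
  have hXne : (X : Polynomial ℤ) ≠ 0 := X_ne_zero
  have hB1 : B 1 = X := by
    have h := hBprod 1 le_rfl
    simpa [Nat.divisors_one, hA1] using h.symm
  have hA2 : A 2 = X ^ 2 + X := by
    have h := hArec 1 le_rfl
    rw [h, hA1]
  have hB2 : B 2 = X + 1 := by
    have h := hBprod 2 (by norm_num)
    have hd : (2 : ℕ).divisors = {1, 2} := by decide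
    rw [hd] at h
    have h2 : A 2 = B 1 * B 2 := by
      rw [h]; rw [Finset.prod_insert (by decide), Finset.prod_singleton]
    rw [hA2, hB1] at h2
    have h3 : X * (X + 1) = X * B 2 := by linear_combination h2
    exact (mul_left_cancel₀ hXne h3).symm
  -- A n = X * v with v(0) = 1
  have hV : ∀ n, 1 ≤ n → ∃ v : Polynomial ℤ, A n = X * v ∧ v.eval 0 = 1 := by
    intro n hn
    induction n with
    | zero => omega
    | succ m ih =>
      rcases Nat.eq_zero_or_pos m with hm | hm
      · subst hm
        exact ⟨1, by simpa using hA1, by simp⟩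
      · obtain ⟨v, hv, hv0⟩ := ih hm
        refine ⟨X * v ^ 2 + 1, ?_, ?_⟩
        · rw [hArec m hm, hv]; ring
        · simp
  -- A (2k+2) = (X^2+X) * q with q(-1) = 1
  have hQ : ∀ k, ∃ q : Polynomial ℤ, A (2 * k + 2) = (X ^ 2 + X) * q ∧ q.eval (-1) = 1 := by
    intro k
    induction k with
    | zero => exact ⟨1, by simpa using hA2, by simp⟩
    | succ m ih =>
      obtain ⟨q, hq, hq1⟩ := ih
      refine ⟨(X ^ 2 + X) ^ 3 * q ^ 4 + 2 * (X ^ 2 + X) * X * q ^ 2 + 1, ?_, ?_⟩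
      · have h1 := hArec (2 * m + 3) (by omega)
        have h2 := hArec (2 * m + 2) (by omega)
        rw [show 2 * (m + 1) + 2 = 2 * m + 3 + 1 from by ring, h1,
          show 2 * m + 3 = 2 * m + 2 + 1 from rfl, h2, hq]
        ring
      · simp [hq1]
  -- A n (-1) = -1 for odd n
  have hAodd : ∀ n, 1 ≤ n → ((Odd n → (A n).eval (-1) = -1) ∧ (Even n → (A n).eval (-1) = 0)) := by
    intro n hn
    induction n with
    | zero => omega
    | succ m ih =>
      rcases Nat.eq_zero_or_pos m with hm | hm
      · subst hm
        constructor
        · intro _; simp [hA1]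
        · intro h; simp at h
      · obtain ⟨iho, ihe⟩ := ih hm
        have hrec := hArec m hm
        constructor
        · intro hodd
          have hme : Even m := by
            have := Nat.odd_iff.mp hodd
            exact Nat.even_iff.mpr (by omega)
          rw [hrec]
          simp [ihe hme]
        · intro heven
          have hmo : Odd m := by
            have := Nat.even_iff.mp heven
            exact Nat.odd_iff.mpr (by omega)
          rw [hrec]
          simp [iho hmo]
  -- eval 0 for n > 1
  have h0 : ∀ n, 1 < n → (B n).eval 0 = 1 := by
    intro n
    induction n using Nat.strong_induction_on with
    | _ n ih =>
      intro hn
      obtain ⟨v, hv, hv0⟩ := hV n (by omega)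
      have h1mem : 1 ∈ n.divisors := Nat.one_mem_divisors.mpr (by omega)
      have hprod := hBprod n (by omega)
      rw [← Finset.mul_prod_erase _ _ h1mem, hB1, hv] at hprod
      have hveq : v = ∏ d ∈ n.divisors.erase 1, B d := mul_left_cancel₀ hXne hprod
      have hnmem : n ∈ n.divisors.erase 1 :=
        Finset.mem_erase.mpr ⟨by omega, Nat.mem_divisors_self n (by omega)⟩
      have heval := congrArg (Polynomial.eval (0 : ℤ)) hveq
      rw [hv0, Polynomial.eval_prod, ← Finset.mul_prod_erase _ _ hnmem] at heval
      have hrest : ∏ d ∈ (n.divisors.erase 1).erase n, (B d).eval 0 = 1 := by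
        apply Finset.prod_eq_one
        intro d hd
        have hdn : d ≠ n := (Finset.mem_erase.mp hd).1
        have hd1 : d ≠ 1 := (Finset.mem_erase.mp (Finset.mem_erase.mp hd).2).1
        have hddvd : d ∣ n := (Nat.mem_divisors.mp (Finset.mem_erase.mp (Finset.mem_erase.mp hd).2).2).1
        have hdpos : 0 < d := Nat.pos_of_dvd_of_pos hddvd (by omega)
        have hdlt : d < n := lt_of_le_of_ne (Nat.le_of_dvd (by omega) hddvd) hdn
        exact ih d hdlt (by omega)
      rw [hrest, mul_one] at heval
      exact heval.symm
  -- eval -1 for n > 2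
  have hA2ne : (X ^ 2 + X : Polynomial ℤ) ≠ 0 := by
    intro h
    have := congrArg (Polynomial.eval (1 : ℤ)) h
    simp at this
  have h2 : ∀ n, 2 < n → (B n).eval (-1) = 1 := by
    intro n
    induction n using Nat.strong_induction_on with
    | _ n ih =>
      intro hn
      have hnpos : 0 < n := by omega
      have hprod := hBprod n (by omega)
      have h1mem : 1 ∈ n.divisors := Nat.one_mem_divisors.mpr (by omega)
      have ihall : ∀ d ∈ (n.divisors.erase 1).erase n, d ≠ 2 → (B d).eval (-1) = 1 := by
        intro d hd hd2
        have hdn : d ≠ n := (Finset.mem_erase.mp hd).1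
        have hd1 : d ≠ 1 := (Finset.mem_erase.mp (Finset.mem_erase.mp hd).2).1
        have hddvd : d ∣ n := (Nat.mem_divisors.mp (Finset.mem_erase.mp (Finset.mem_erase.mp hd).2).2).1
        have hdpos : 0 < d := Nat.pos_of_dvd_of_pos hddvd hnpos
        have hdlt : d < n := lt_of_le_of_ne (Nat.le_of_dvd hnpos hddvd) hdn
        exact ih d hdlt (by omega)
      rcases Nat.even_or_odd n with he | ho
      · -- even case
        obtain ⟨k, hk⟩ := he
        have hk2 : 2 ≤ k := by omega
        obtain ⟨q, hq, hq1⟩ := hQ (k - 1)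
        rw [show 2 * (k - 1) + 2 = n from by omega] at hq
        have h2mem : 2 ∈ n.divisors.erase 1 := by
          refine Finset.mem_erase.mpr ⟨by omega, Nat.mem_divisors.mpr ⟨⟨k, by omega⟩, by omega⟩⟩
        rw [← Finset.mul_prod_erase _ _ h1mem, ← Finset.mul_prod_erase _ _ h2mem,
          hB1, hB2, hq] at hprod
        have hcan : (X ^ 2 + X) * q = (X ^ 2 + X) * ∏ d ∈ (n.divisors.erase 1).erase 2, B d := by
          linear_combination hprod
        have hqeq := mul_left_cancel₀ hA2ne hcan
        have hnmem : n ∈ (n.divisors.erase 1).erase 2 :=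
          Finset.mem_erase.mpr ⟨by omega,
            Finset.mem_erase.mpr ⟨by omega, Nat.mem_divisors_self n (by omega)⟩⟩
        have heval := congrArg (Polynomial.eval (-1 : ℤ)) hqeq
        rw [hq1, Polynomial.eval_prod, ← Finset.mul_prod_erase _ _ hnmem] at heval
        have hrest : ∏ d ∈ ((n.divisors.erase 1).erase 2).erase n, (B d).eval (-1) = 1 := by
          apply Finset.prod_eq_one
          intro d hd
          have hdn : d ≠ n := (Finset.mem_erase.mp hd).1
          have hd2 : d ≠ 2 := (Finset.mem_erase.mp (Finset.mem_erase.mp hd).2).1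
          have hdmem : d ∈ (n.divisors.erase 1).erase n := by
            have h' := (Finset.mem_erase.mp (Finset.mem_erase.mp hd).2).2
            exact Finset.mem_erase.mpr ⟨hdn, h'⟩
          exact ihall d hdmem hd2
        rw [hrest, mul_one] at heval
        exact heval.symm
      · -- odd case
        have hAn : (A n).eval (-1) = -1 := (hAodd n (by omega)).1 ho
        rw [← Finset.mul_prod_erase _ _ h1mem, hB1] at hprod
        have hnmem : n ∈ n.divisors.erase 1 :=
          Finset.mem_erase.mpr ⟨by omega, Nat.mem_divisors_self n (by omega)⟩
        have heval := congrArg (Polynomial.eval (-1 : ℤ)) hprod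
        rw [hAn, Polynomial.eval_mul, Polynomial.eval_prod,
          ← Finset.mul_prod_erase _ _ hnmem] at heval
        have hrest : ∏ d ∈ (n.divisors.erase 1).erase n, (B d).eval (-1) = 1 := by
          apply Finset.prod_eq_one
          intro d hd
          have hddvd : d ∣ n := (Nat.mem_divisors.mp (Finset.mem_erase.mp (Finset.mem_erase.mp hd).2).2).1
          have hd2 : d ≠ 2 := by
            intro h; subst h
            obtain ⟨t, ht⟩ := hddvd
            exact (Nat.not_odd_iff_even.mpr ⟨t, by omega⟩) ho
          exact ihall d hd hd2
        rw [hrest, mul_one] at heval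
        simp at heval
        linarith [heval]
  refine ⟨⟨by simp [hB1], fun n hn => h0 n hn⟩, ⟨by simp [hB1], by simp [hB2], fun n hn => h2 n hn⟩⟩
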